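/- Let R ⊆ S be a finite normalizing extension of K-algebras, with S = Σᵢ R xᵢ and R xᵢ = xᵢ R for finitely many x₁,...,xₙ ∈ S. If E is a locally finite left R-module, then Hom_R(S, E), with the left S-module structure (s·f)(x) = f(xs), is locally finite as a left R-module. -/
import Mathlib


theorem stmt8 (K S : Type*) [Field K] [Ring S] [Algebra K S]
    (R : Subalgebra K S) {n : ℕ} (x : Fin n → S)
    (hgen : Submodule.span R (Set.range x) = (⊤ : Submodule R S))
    (hnormal : ∀ i : Fin n,
      (fun r => r * x i) '' (R : Set S) = (fun r => x i * r) '' (R : Set S))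
    (E : Type*) [AddCommGroup E] [Module R E] [Module K E] [IsScalarTower K R E]
    [SMulCommClass R K E]
    (hE : ∀ e : E, FiniteDimensional K ((Submodule.span R ({e} : Set E)).restrictScalars K)) :
    ∀ f : S →ₗ[R] E, ∃ W : Submodule K (S →ₗ[R] E), FiniteDimensional K W ∧
      ∀ r : R, ∃ g ∈ W, ∀ s : S, g s = f (s * (r : S)) := by
  intro f
  classical
  -- evaluation map at the generators
  let Φ : (S →ₗ[R] E) →ₗ[K] (Fin n → E) :=
    { toFun := fun g i => g (x i)
      map_add' := by intros; ext i; simp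
      map_smul' := by intros; ext i; simp }
  have hΦinj : Function.Injective Φ := by
    intro g h hgh
    ext s
    have hs : s ∈ Submodule.span R (Set.range x) := hgen ▸ Submodule.mem_top
    induction hs using Submodule.span_induction with
    | mem y hy =>
      obtain ⟨i, rfl⟩ := hy
      exact congrFun hgh i
    | zero => simp
    | add a b _ _ ha hb => simp [ha, hb]
    | smul r a _ ha => simp [ha]
  haveI : ∀ i : Fin n, FiniteDimensional K
      ((Submodule.span R ({f (x i)} : Set E)).restrictScalars K) := fun i => hE (f (x i))
  let inc : (∀ i : Fin n, (Submodule.span R ({f (x i)} : Set E)).restrictScalars K)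
      →ₗ[K] (Fin n → E) :=
    LinearMap.pi fun i =>
      ((Submodule.span R ({f (x i)} : Set E)).restrictScalars K).subtype ∘ₗ LinearMap.proj i
  let V : Submodule K (Fin n → E) := LinearMap.range inc
  haveI hV : FiniteDimensional K V := by
    exact Module.Finite.range inc
  refine ⟨V.comap Φ, ?_, ?_⟩
  · let Φ' : (V.comap Φ) →ₗ[K] V := Φ.restrict fun g hg => hg
    have hΦ'inj : Function.Injective Φ' := by
      intro a b h
      apply Subtype.ext
      apply hΦinj
      exact congrArg Subtype.val h
    exact FiniteDimensional.of_injective Φ' hΦ'inj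
  · intro r
    refine ⟨f ∘ₗ LinearMap.mulRight R (r : S), ?_, fun s => rfl⟩
    refine ⟨fun i => ⟨f (x i * (r : S)), ?_⟩, ?_⟩
    · have hx : x i * (r : S) ∈ (fun a => x i * a) '' (R : Set S) := ⟨(r : S), r.2, rfl⟩
      rw [← hnormal i] at hx
      obtain ⟨a, ha, haeq⟩ := hx
      have : f (x i * (r : S)) = (⟨a, ha⟩ : R) • f (x i) := by
        rw [← haeq, ← map_smul f]
        rfl
      rw [Submodule.restrictScalars_mem, this]
      exact Submodule.smul_mem _ _ (Submodule.mem_span_singleton_self _)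
    · ext i
      rfl
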